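/- Let a = √3/3 and β > 0. Then the cross product (∂p/∂u × ∂p/∂v)(−1,−1) equals ((2/3)α(1−2α), (2/3)α(1−2α), (4/3)α(1−α)), and for α > 0 this vector is parallel to the vector (−1,−1,1) (equivalently, to the unit normal of the sphere at p(−1,−1) = (−√3/3,−√3/3,√3/3)) if and only if α = 3/4. -/

import Mathlib

noncomputable section

open Matrix

/-- Quadratic Bernstein polynomials (parametrized on `[-1,1]`). -/
def bern (i : Fin 3) (u : ℝ) : ℝ :=
  (Nat.choose 2 (i : ℕ)) * ((1 + u) / 2) ^ (i : ℕ) * ((1 - u) / 2) ^ (2 - (i : ℕ))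

/-- Control points `ctrl a α β i j = b i j` of the tensor product quadratic Bézier patch:
`b₀₀ = (-a,-a,√(1-2a²))`, `b₂₀ = (a,-a,√(1-2a²))`, `b₀₂ = (-a,a,√(1-2a²))`,
`b₂₂ = (a,a,√(1-2a²))`, `b₁₀ = α(b₀₀+b₂₀)`, `b₀₁ = α(b₀₀+b₀₂)`, `b₂₁ = α(b₂₀+b₂₂)`,
`b₁₂ = α(b₀₂+b₂₂)`, `b₁₁ = β(0,0,1)`. The first index is the `u`-index. -/
def ctrl (a α β : ℝ) : Fin 3 → Fin 3 → (Fin 3 → ℝ) :=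
  ![![![-a, -a, Real.sqrt (1 - 2*a^2)],
     α • (![-a, -a, Real.sqrt (1 - 2*a^2)] + ![-a, a, Real.sqrt (1 - 2*a^2)]),
     ![-a, a, Real.sqrt (1 - 2*a^2)]],
    ![α • (![-a, -a, Real.sqrt (1 - 2*a^2)] + ![a, -a, Real.sqrt (1 - 2*a^2)]),
     β • ![0, 0, 1],
     α • (![-a, a, Real.sqrt (1 - 2*a^2)] + ![a, a, Real.sqrt (1 - 2*a^2)])],
    ![![a, -a, Real.sqrt (1 - 2*a^2)],
     α • (![a, -a, Real.sqrt (1 - 2*a^2)] + ![a, a, Real.sqrt (1 - 2*a^2)]),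
     ![a, a, Real.sqrt (1 - 2*a^2)]]]

/-- The tensor product quadratic Bézier patch `p(u,v) = ∑ᵢ ∑ⱼ Bᵢ²(u) Bⱼ²(v) bᵢⱼ`,
viewed as a map into `Fin 3 → ℝ`. -/
def bez (a α β u v : ℝ) : Fin 3 → ℝ :=
  ∑ i : Fin 3, ∑ j : Fin 3, (bern i u * bern j v) • ctrl a α β i j

/-- For `a = √3/3` and `β > 0`, the cross product `(∂p/∂u × ∂p/∂v)(-1,-1)` equals
`((2/3)α(1-2α), (2/3)α(1-2α), (4/3)α(1-α))`, and for `α > 0` this vector is parallel to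
`(-1,-1,1)` (the direction of the unit normal of the sphere at
`p(-1,-1) = (-√3/3,-√3/3,√3/3)`) if and only if `α = 3/4`. -/
theorem G1_corner_condition (a : ℝ) (haa : a = Real.sqrt 3 / 3) (α β : ℝ) (hβ : 0 < β) :
    (deriv (fun u => bez a α β u (-1)) (-1)) ⨯₃ (deriv (fun v => bez a α β (-1) v) (-1)) =
      ![2/3*α*(1 - 2*α), 2/3*α*(1 - 2*α), 4/3*α*(1 - α)] ∧
    (0 < α →
      ((∃ c : ℝ, c ≠ 0 ∧
          (deriv (fun u => bez a α β u (-1)) (-1)) ⨯₃ (deriv (fun v => bez a α β (-1) v) (-1))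
            = c • ![(-1 : ℝ), -1, 1]) ↔ α = 3/4)) := by
  have ha0 : (0:ℝ) ≤ a := by rw [haa]; positivity
  have ha2 : a ^ 2 = 1/3 := by
    rw [haa, div_pow, Real.sq_sqrt (by norm_num : (0:ℝ) ≤ 3)]; norm_num
  have hz : Real.sqrt (1 - 2*a^2) = a := by
    rw [show (1 : ℝ) - 2*a^2 = a^2 by rw [ha2]; norm_num, Real.sqrt_sq ha0]
  -- Bernstein values and derivatives at -1
  have hbv0 : bern 0 (-1) = 1 := by norm_num [bern]
  have hbv1 : bern 1 (-1) = 0 := by norm_num [bern]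
  have hbv2 : bern 2 (-1) = 0 := by norm_num [bern]
  have hm : HasDerivAt (fun u : ℝ => (1 - u)/2) (-1/2) (-1) := by
    simpa using ((hasDerivAt_id (-1:ℝ)).const_sub 1).div_const 2
  have hp : HasDerivAt (fun u : ℝ => (1 + u)/2) (1/2) (-1) := by
    simpa using ((hasDerivAt_id (-1:ℝ)).const_add 1).div_const 2
  have hb0 : HasDerivAt (fun u : ℝ => bern 0 u) (-1) (-1) := by
    have h := hm.pow 2
    have he : (fun u : ℝ => bern 0 u) = fun u : ℝ => ((1 - u)/2)^2 := by
      funext u; simp [bern]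
    rw [he]; exact h.congr_deriv (by norm_num)
  have hb1 : HasDerivAt (fun u : ℝ => bern 1 u) 1 (-1) := by
    have h := (hp.mul hm).const_mul 2
    have he : (fun u : ℝ => bern 1 u) = fun u : ℝ => 2 * (((1 + u)/2) * ((1 - u)/2)) := by
      funext u; simp [bern]; ring
    rw [he]; exact h.congr_deriv (by norm_num)
  have hb2 : HasDerivAt (fun u : ℝ => bern 2 u) 0 (-1) := by
    have h := hp.pow 2
    have he : (fun u : ℝ => bern 2 u) = fun u : ℝ => ((1 + u)/2)^2 := by
      funext u; simp [bern]
    rw [he]; exact h.congr_deriv (by norm_num)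
  -- the u-derivative
  have keyu : (fun u => bez a α β u (-1)) =
      fun u => bern 0 u • ctrl a α β 0 0 + bern 1 u • ctrl a α β 1 0 +
        bern 2 u • ctrl a α β 2 0 := by
    funext u
    simp [bez, Fin.sum_univ_three, hbv0, hbv1, hbv2]
  have keyv : (fun v => bez a α β (-1) v) =
      fun v => bern 0 v • ctrl a α β 0 0 + bern 1 v • ctrl a α β 0 1 +
        bern 2 v • ctrl a α β 0 2 := by
    funext v
    simp [bez, Fin.sum_univ_three, hbv0, hbv1, hbv2]
  have hdu : deriv (fun u => bez a α β u (-1)) (-1) =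
      (-1 : ℝ) • ctrl a α β 0 0 + (1:ℝ) • ctrl a α β 1 0 + (0:ℝ) • ctrl a α β 2 0 := by
    rw [keyu]
    exact (((hb0.smul_const _).add (hb1.smul_const _)).add (hb2.smul_const _)).deriv
  have hdv : deriv (fun v => bez a α β (-1) v) (-1) =
      (-1 : ℝ) • ctrl a α β 0 0 + (1:ℝ) • ctrl a α β 0 1 + (0:ℝ) • ctrl a α β 0 2 := by
    rw [keyv]
    exact (((hb0.smul_const _).add (hb1.smul_const _)).add (hb2.smul_const _)).deriv
  have hcross : (deriv (fun u => bez a α β u (-1)) (-1)) ⨯₃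
      (deriv (fun v => bez a α β (-1) v) (-1)) =
      ![2/3*α*(1 - 2*α), 2/3*α*(1 - 2*α), 4/3*α*(1 - α)] := by
    rw [hdu, hdv]
    funext i
    fin_cases i
    · simp [cross_apply, ctrl, hz]; linear_combination (2*α - 4*α^2) * ha2
    · simp [cross_apply, ctrl, hz]; linear_combination (2*α - 4*α^2) * ha2
    · simp [cross_apply, ctrl, hz]; linear_combination (4*α - 4*α^2) * ha2
  refine ⟨hcross, fun hα => ⟨?_, ?_⟩⟩
  · rintro ⟨c, hc, hEq⟩
    rw [hcross] at hEq
    have e0 := congr_fun hEq 0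
    have e2 := congr_fun hEq 2
    simp at e0 e2
    nlinarith
  · intro h
    refine ⟨1/4, by norm_num, ?_⟩
    rw [hcross, h]
    funext i
    fin_cases i <;> norm_num

end
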